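/- Let ∇ be a Type A connection on ℝ² (constant Christoffel symbols Γ_{ij}^k = Γ_{ji}^k) with Ricci tensor ρ not identically zero. Then the following conditions are equivalent: (1) ρ₁₁ = ρ₁₂ = ρ₂₁ = 0, i.e. ρ = ρ₂₂ dx²⊗dx²; (2) Γ₁₁² = 0 and Γ₁₂² = 0; (3) ρ₁₁ = ρ₁₂ = ρ₂₁ = 0 and ρ₂₂ = Γ₁₂¹(Γ₂₂² − Γ₁₂¹) + Γ₁₁¹Γ₂₂¹. -/
import Mathlib


noncomputable section

/-- Ricci tensor of the Type A connection on ℝ² with constant Christoffel symbols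
`Γ i j k = Γ_{ij}^k`:  `ρ_{jk} = Σ_{i,p} (Γ_{ip}^i Γ_{jk}^p − Γ_{jp}^i Γ_{ik}^p)`. -/
def ricciA (Γ : Fin 2 → Fin 2 → Fin 2 → ℝ) (j k : Fin 2) : ℝ :=
  ∑ i, ∑ q, (Γ i q i * Γ j k q - Γ j q i * Γ i k q)

/-- for a non-flat Type A connection, the three stated conditions are
equivalent. -/
theorem stmt1 (Γ : Fin 2 → Fin 2 → Fin 2 → ℝ)
    (hΓ : ∀ i j k, Γ i j k = Γ j i k)
    (hρ : ¬ ∀ j k, ricciA Γ j k = 0) :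
    ((ricciA Γ 0 0 = 0 ∧ ricciA Γ 0 1 = 0 ∧ ricciA Γ 1 0 = 0) ↔
      (Γ 0 0 1 = 0 ∧ Γ 0 1 1 = 0)) ∧
    ((Γ 0 0 1 = 0 ∧ Γ 0 1 1 = 0) ↔
      (ricciA Γ 0 0 = 0 ∧ ricciA Γ 0 1 = 0 ∧ ricciA Γ 1 0 = 0 ∧
        ricciA Γ 1 1 = Γ 0 1 0 * (Γ 1 1 1 - Γ 0 1 0) + Γ 0 0 0 * Γ 1 1 0)) := by
  have hsym0 : Γ 1 0 0 = Γ 0 1 0 := hΓ 1 0 0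
  have hsym1 : Γ 1 0 1 = Γ 0 1 1 := hΓ 1 0 1
  set a := Γ 0 0 0 with ha
  set b := Γ 0 0 1 with hb
  set c := Γ 0 1 0 with hc
  set d := Γ 0 1 1 with hd
  set e := Γ 1 1 0 with he
  set f := Γ 1 1 1 with hf
  have r00 : ricciA Γ 0 0 = a * d - b * c + b * f - d * d := by
    simp [ricciA, Fin.sum_univ_two, hsym0, hsym1]; ring
  have r01 : ricciA Γ 0 1 = c * d - b * e := by
    simp [ricciA, Fin.sum_univ_two, hsym0, hsym1]; ring
  have r10 : ricciA Γ 1 0 = c * d - b * e := by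
    simp [ricciA, Fin.sum_univ_two, hsym0, hsym1]; ring
  have r11 : ricciA Γ 1 1 = a * e - c * c + c * f - d * e := by
    simp [ricciA, Fin.sum_univ_two, hsym0, hsym1]; ring
  have main : (ricciA Γ 0 0 = 0 ∧ ricciA Γ 0 1 = 0 ∧ ricciA Γ 1 0 = 0) → b = 0 ∧ d = 0 := by
    rintro ⟨h0, h1, -⟩
    rw [r00] at h0; rw [r01] at h1
    have h11 : ricciA Γ 1 1 ≠ 0 := by
      intro h
      apply hρ
      intro j k
      fin_cases j <;> fin_cases k <;> simp_all [r00, r01, r10, r11]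
    rw [r11] at h11
    constructor
    · by_contra hb0
      apply h11
      have : b * (a * e - c * c + c * f - d * e) = 0 := by linear_combination c * h0 - (a - d) * h1
      rcases mul_eq_zero.1 this with h | h
      · exact absurd h hb0
      · exact h
    · by_contra hd0
      apply h11
      have : d * (a * e - c * c + c * f - d * e) = 0 := by linear_combination e * h0 + (f - c) * h1
      rcases mul_eq_zero.1 this with h | h
      · exact absurd h hd0
      · exact h
  constructor
  · constructor
    · exact main
    · rintro ⟨hb0, hd0⟩
      refine ⟨?_, ?_, ?_⟩ <;> rw [show (0:ℝ) = 0 from rfl] <;>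
        simp [r00, r01, r10, hb0, hd0]
  · constructor
    · rintro ⟨hb0, hd0⟩
      refine ⟨?_, ?_, ?_, ?_⟩ <;> simp [r00, r01, r10, r11, hb0, hd0] <;> ring
    · rintro ⟨h0, h1, h2, -⟩
      exact main ⟨h0, h1, h2⟩
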